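/- For all s ∈ [2, 5/2], the inequality −2(s−1)·log((2^s − 1)/(2^s − 2)) ≥ −log(9/4) + log(8·2^{1/3}/9)·(s − 2) holds. -/

import Mathlib

open Real

noncomputable def Cst : ℝ := Real.log (8 * (2:ℝ) ^ ((1:ℝ)/3) / 9)

noncomputable def Gf (s : ℝ) : ℝ :=
  -2*(s-1)*(Real.log ((2:ℝ)^s - 1) - Real.log ((2:ℝ)^s - 2)) - Cst * (s-2) + Real.log (9/4)

noncomputable def Gf' (s : ℝ) : ℝ :=
  -2*(Real.log ((2:ℝ)^s - 1) - Real.log ((2:ℝ)^s - 2))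
    + 2*(s-1)*Real.log 2*(2:ℝ)^s/(((2:ℝ)^s - 1)*((2:ℝ)^s - 2)) - Cst

noncomputable def Gf'' (s : ℝ) : ℝ :=
  4*Real.log 2*(2:ℝ)^s/(((2:ℝ)^s - 1)*((2:ℝ)^s - 2))
    - 2*(s-1)*(Real.log 2)^2*(2:ℝ)^s*(((2:ℝ)^s)^2 - 2)/((((2:ℝ)^s - 1)*((2:ℝ)^s - 2))^2)

lemma rpow_gt_two' {s : ℝ} (hs : 1 < s) : 2 < (2:ℝ)^s := by
  calc (2:ℝ) = (2:ℝ)^(1:ℝ) := by simp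
  _ < (2:ℝ)^s := Real.rpow_lt_rpow_of_exponent_lt one_lt_two hs

lemma hasDerivAt_Gf {s : ℝ} (hs : 1 < s) : HasDerivAt Gf (Gf' s) s := by
  have hx2 : 2 < (2:ℝ)^s := rpow_gt_two' hs
  have hxD : HasDerivAt (fun s : ℝ => (2:ℝ)^s) ((2:ℝ)^s * Real.log 2) s :=
    (hasStrictDerivAt_const_rpow two_pos s).hasDerivAt
  have h1 : HasDerivAt (fun s : ℝ => Real.log ((2:ℝ)^s - 1))
      (((2:ℝ)^s * Real.log 2) / ((2:ℝ)^s - 1)) s :=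
    (hxD.sub_const 1).log (by linarith)
  have h2 : HasDerivAt (fun s : ℝ => Real.log ((2:ℝ)^s - 2))
      (((2:ℝ)^s * Real.log 2) / ((2:ℝ)^s - 2)) s :=
    (hxD.sub_const 2).log (by linarith)
  have hlin : HasDerivAt (fun s : ℝ => -2*(s-1)) (-2) s := by
    simpa using ((hasDerivAt_id s).sub_const 1).const_mul (-2)
  have hprod := hlin.mul (h1.sub h2)
  have hC : HasDerivAt (fun s : ℝ => Cst * (s-2)) Cst s := by
    simpa using ((hasDerivAt_id s).sub_const 2).const_mul Cst
  have := (hprod.sub hC).add_const (Real.log (9/4))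
  refine this.congr_deriv ?_
  have hne1 : (2:ℝ)^s - 1 ≠ 0 := by linarith
  have hne2 : (2:ℝ)^s - 2 ≠ 0 := by linarith
  simp only [Gf', Pi.sub_apply]
  field_simp
  ring

lemma hasDerivAt_Gf' {s : ℝ} (hs : 1 < s) : HasDerivAt Gf' (Gf'' s) s := by
  have hx2 : 2 < (2:ℝ)^s := rpow_gt_two' hs
  have hne1 : (2:ℝ)^s - 1 ≠ 0 := by linarith
  have hne2 : (2:ℝ)^s - 2 ≠ 0 := by linarith
  have hneD : ((2:ℝ)^s - 1) * ((2:ℝ)^s - 2) ≠ 0 := mul_ne_zero hne1 hne2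
  have hxD : HasDerivAt (fun s : ℝ => (2:ℝ)^s) ((2:ℝ)^s * Real.log 2) s :=
    (hasStrictDerivAt_const_rpow two_pos s).hasDerivAt
  have h1 : HasDerivAt (fun s : ℝ => Real.log ((2:ℝ)^s - 1))
      (((2:ℝ)^s * Real.log 2) / ((2:ℝ)^s - 1)) s :=
    (hxD.sub_const 1).log (by linarith)
  have h2 : HasDerivAt (fun s : ℝ => Real.log ((2:ℝ)^s - 2))
      (((2:ℝ)^s * Real.log 2) / ((2:ℝ)^s - 2)) s :=
    (hxD.sub_const 2).log (by linarith)
  have hA : HasDerivAt (fun s : ℝ => -2*(Real.log ((2:ℝ)^s - 1) - Real.log ((2:ℝ)^s - 2)))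
      (-2*((((2:ℝ)^s * Real.log 2) / ((2:ℝ)^s - 1)) - (((2:ℝ)^s * Real.log 2) / ((2:ℝ)^s - 2)))) s :=
    (h1.sub h2).const_mul (-2)
  have hN : HasDerivAt (fun s : ℝ => 2*(s-1)*Real.log 2*(2:ℝ)^s)
      (2*Real.log 2*(2:ℝ)^s + 2*(s-1)*Real.log 2*((2:ℝ)^s * Real.log 2)) s := by
    have hl : HasDerivAt (fun s : ℝ => 2*(s-1)*Real.log 2) (2*Real.log 2) s := by
      have := ((hasDerivAt_id s).sub_const 1).const_mul 2
      simpa using this.mul_const (Real.log 2)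
    exact (hl.mul hxD).congr_deriv (by ring)
  have hD : HasDerivAt (fun s : ℝ => ((2:ℝ)^s - 1)*((2:ℝ)^s - 2))
      (((2:ℝ)^s * Real.log 2)*((2:ℝ)^s - 2) + ((2:ℝ)^s - 1)*((2:ℝ)^s * Real.log 2)) s :=
    (hxD.sub_const 1).mul (hxD.sub_const 2)
  have hQ := hN.div hD hneD
  have := (hA.add hQ).sub_const Cst
  refine this.congr_deriv ?_
  simp only [Gf'']
  field_simp
  ring

lemma two_log_le' (u : ℝ) (hu : 1 ≤ u) : 2 * Real.log u ≤ u - 1/u := by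
  have hdaux : ∀ x : ℝ, 0 < x →
      HasDerivAt (fun u : ℝ => u - 1/u - 2 * Real.log u) (1 - (-(x^2)⁻¹) - 2 * x⁻¹) x := by
    intro x hx
    have h1 : HasDerivAt (fun u : ℝ => 1/u) (-(x^2)⁻¹) x := by
      simpa [one_div] using hasDerivAt_inv hx.ne'
    exact ((hasDerivAt_id x).sub h1).sub ((Real.hasDerivAt_log hx.ne').const_mul 2)
  have key : MonotoneOn (fun u : ℝ => u - 1/u - 2 * Real.log u) (Set.Ici 1) := by
    apply monotoneOn_of_deriv_nonneg (convex_Ici 1)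
    · intro x hx
      have hx0 : (0:ℝ) < x := lt_of_lt_of_le one_pos hx
      exact (hdaux x hx0).continuousAt.continuousWithinAt
    · intro x hx
      have hx0 : (0:ℝ) < x := lt_of_lt_of_le one_pos (le_of_lt (by simpa using hx))
      exact (hdaux x hx0).differentiableAt.differentiableWithinAt
    · intro x hx
      have hx1 : (1:ℝ) < x := by simpa using hx
      have hx0 : (0:ℝ) < x := lt_trans one_pos hx1
      rw [(hdaux x hx0).deriv]
      have h : 1 - (-(x^2)⁻¹) - 2 * x⁻¹ = (1 - x⁻¹)^2 := by
        field_simp; ring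
      rw [h]; positivity
  have := key (by simp : (1:ℝ) ∈ Set.Ici 1) (by simpa using hu) hu
  simp at this
  rw [one_div]; linarith

lemma hfour : (2:ℝ) ^ (2:ℝ) = 4 := by norm_num

lemma rpow_bounds {s : ℝ} (h2 : 2 ≤ s) (h52 : s ≤ 5/2) :
    4 ≤ (2:ℝ)^s ∧ ((2:ℝ)^s)^2 ≤ 32 := by
  constructor
  · calc (4:ℝ) = (2:ℝ)^(2:ℝ) := hfour.symm
    _ ≤ (2:ℝ)^s := Real.rpow_le_rpow_of_exponent_le one_le_two h2
  · have e1 : ((2:ℝ)^s)^(2:ℕ) = (2:ℝ)^(s*2) := by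
      rw [← Real.rpow_natCast ((2:ℝ)^s) 2, ← Real.rpow_mul (by norm_num)]
      norm_num
    have e2 : (2:ℝ)^(s*2) ≤ (2:ℝ)^(5:ℝ) :=
      Real.rpow_le_rpow_of_exponent_le one_le_two (by linarith)
    have e3 : (2:ℝ)^(5:ℝ) = 32 := by norm_num
    calc ((2:ℝ)^s)^2 = (2:ℝ)^(s*2) := e1
    _ ≤ 32 := e3 ▸ e2

lemma core {s : ℝ} (h2 : 2 ≤ s) (h52 : s ≤ 5/2) :
    2*(s-1)*Real.log 2*(((2:ℝ)^s)^2 - 2) ≤ 4*((2:ℝ)^s - 1)*((2:ℝ)^s - 2) := by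
  obtain ⟨hx4, hx32⟩ := rpow_bounds h2 h52
  set x := (2:ℝ)^s with hxdef
  have hxpos : (0:ℝ) < x := by linarith
  have hlogx : Real.log x = s * Real.log 2 := Real.log_rpow two_pos s
  have hlogx2 : Real.log (x/2) = (s-1) * Real.log 2 := by
    rw [Real.log_div (by linarith) (by norm_num), hlogx]; ring
  set u := Real.sqrt (x/2) with hudef
  have hu2 : u^2 = x/2 := Real.sq_sqrt (by linarith)
  have hu1 : 1 ≤ u := by nlinarith [Real.sqrt_nonneg (x/2), hu2]
  have hupos : (0:ℝ) < u := by linarith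
  have hlogu : Real.log (x/2) = 2 * Real.log u := by
    rw [← hu2, Real.log_pow]; push_cast; ring
  have key1 : Real.log (x/2) ≤ u - 1/u := by
    rw [hlogu]; exact two_log_le' u hu1
  have key2 : x^2 - 2 ≤ 4*(x-1)*u := by
    have hsq : (x^2-2)^2 ≤ (4*(x-1)*u)^2 := by nlinarith [sq_nonneg (x-4)]
    nlinarith [mul_pos (mul_pos (by linarith : (0:ℝ) < 4*(x-1)) hupos) hupos]
  have h5 : (u - 1/u)*(x^2-2)*u ≤ 2*(x-1)*(x-2)*u := by
    have huu : (1/u)*u = 1 := by field_simp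
    calc (u - 1/u)*(x^2-2)*u = (u*u - (1/u)*u)*(x^2-2) := by ring
    _ = (u^2-1)*(x^2-2) := by rw [huu]; ring
    _ = (x/2-1)*(x^2-2) := by rw [hu2]
    _ ≤ 2*(x-1)*(x-2)*u := by
        nlinarith [mul_le_mul_of_nonneg_left key2 (show (0:ℝ) ≤ (x-2)/2 by linarith)]
  have key3 : (u - 1/u)*(x^2-2) ≤ 2*(x-1)*(x-2) := le_of_mul_le_mul_right h5 hupos
  have hx2pos : (0:ℝ) ≤ x^2 - 2 := by nlinarith
  calc 2*(s-1)*Real.log 2*(x^2 - 2) = 2 * (Real.log (x/2) * (x^2-2)) := by rw [hlogx2]; ring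
  _ ≤ 2 * ((u - 1/u)*(x^2-2)) := by nlinarith [mul_le_mul_of_nonneg_right key1 hx2pos]
  _ ≤ 4*(x-1)*(x-2) := by nlinarith [key3]

lemma Gf''_nonneg {s : ℝ} (h2 : 2 ≤ s) (h52 : s ≤ 5/2) : 0 ≤ Gf'' s := by
  have hcore := core h2 h52
  obtain ⟨hx4, hx32⟩ := rpow_bounds h2 h52
  set x := (2:ℝ)^s with hxdef
  have hxpos : (0:ℝ) < x := by linarith
  have hne1 : x - 1 ≠ 0 := by intro h; nlinarith
  have hne2 : x - 2 ≠ 0 := by intro h; nlinarith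
  have hL : 0 < Real.log 2 := Real.log_pos one_lt_two
  have e : Gf'' s = (4*Real.log 2*x*((x-1)*(x-2)) - 2*(s-1)*(Real.log 2)^2*x*(x^2-2))
      / ((x-1)*(x-2))^2 := by
    simp only [Gf'', ← hxdef]
    field_simp
  rw [e]
  apply div_nonneg _ (by positivity)
  have hLx : (0:ℝ) ≤ Real.log 2 * x := by positivity
  nlinarith [mul_le_mul_of_nonneg_left hcore hLx]

lemma Gf_two : Gf 2 = 0 := by
  have l9 : Real.log ((9:ℝ)/4) = 2*Real.log 3 - 2*Real.log 2 := by
    rw [Real.log_div (by norm_num) (by norm_num),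
      show (9:ℝ) = 3^2 by norm_num, show (4:ℝ) = 2^2 by norm_num,
      Real.log_pow, Real.log_pow]
    push_cast; ring
  simp only [Gf, hfour]
  rw [l9]
  norm_num
  ring

lemma Cst_eq : Cst = (10/3)*Real.log 2 - 2*Real.log 3 := by
  have hrp : (0:ℝ) < (2:ℝ)^((1:ℝ)/3) := Real.rpow_pos_of_pos two_pos _
  rw [Cst, Real.log_div (by positivity) (by norm_num),
    Real.log_mul (by norm_num) hrp.ne', Real.log_rpow two_pos,
    show (8:ℝ) = 2^3 by norm_num, show (9:ℝ) = 3^2 by norm_num,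
    Real.log_pow, Real.log_pow]
  push_cast; ring

lemma Gf'_two : Gf' 2 = 0 := by
  simp only [Gf', hfour, Cst_eq]
  norm_num
  ring

lemma Gf_nonneg {s : ℝ} (hs : s ∈ Set.Icc (2:ℝ) (5/2)) : 0 ≤ Gf s := by
  have hsub : ∀ x ∈ Set.Icc (2:ℝ) (5/2), (1:ℝ) < x := fun x hx => by
    have := hx.1; linarith
  have h2mem : (2:ℝ) ∈ Set.Icc (2:ℝ) (5/2) := by constructor <;> norm_num
  have hmono' : MonotoneOn Gf' (Set.Icc (2:ℝ) (5/2)) := by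
    apply monotoneOn_of_deriv_nonneg (convex_Icc _ _)
    · intro x hx
      exact (hasDerivAt_Gf' (hsub x hx)).continuousAt.continuousWithinAt
    · intro x hx
      rw [interior_Icc] at hx
      exact (hasDerivAt_Gf' (hsub x (Set.Ioo_subset_Icc_self hx))).differentiableAt.differentiableWithinAt
    · intro x hx
      rw [interior_Icc] at hx
      rw [(hasDerivAt_Gf' (hsub x (Set.Ioo_subset_Icc_self hx))).deriv]
      exact Gf''_nonneg hx.1.le hx.2.le
  have hG'nonneg : ∀ x ∈ Set.Icc (2:ℝ) (5/2), 0 ≤ Gf' x := by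
    intro x hx
    have := hmono' h2mem hx hx.1
    rw [Gf'_two] at this
    exact this
  have hmono : MonotoneOn Gf (Set.Icc (2:ℝ) (5/2)) := by
    apply monotoneOn_of_deriv_nonneg (convex_Icc _ _)
    · intro x hx
      exact (hasDerivAt_Gf (hsub x hx)).continuousAt.continuousWithinAt
    · intro x hx
      rw [interior_Icc] at hx
      exact (hasDerivAt_Gf (hsub x (Set.Ioo_subset_Icc_self hx))).differentiableAt.differentiableWithinAt
    · intro x hx
      rw [interior_Icc] at hx
      rw [(hasDerivAt_Gf (hsub x (Set.Ioo_subset_Icc_self hx))).deriv]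
      exact hG'nonneg x (Set.Ioo_subset_Icc_self hx)
  have := hmono h2mem hs hs.1
  rw [Gf_two] at this
  exact this

theorem stmt_16 (s : ℝ) (hs : s ∈ Set.Icc (2 : ℝ) (5/2)) :
    -Real.log (9/4) + Real.log (8 * (2 : ℝ) ^ ((1 : ℝ)/3) / 9) * (s - 2) ≤
      -2 * (s - 1) * Real.log (((2 : ℝ) ^ s - 1) / ((2 : ℝ) ^ s - 2)) := by
  have hx2 : 2 < (2:ℝ)^s := rpow_gt_two' (by have := hs.1; linarith)
  have hG := Gf_nonneg hs
  simp only [Gf, Cst] at hG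
  have e : Real.log (((2:ℝ)^s - 1) / ((2:ℝ)^s - 2))
      = Real.log ((2:ℝ)^s - 1) - Real.log ((2:ℝ)^s - 2) :=
    Real.log_div (by linarith) (by linarith)
  rw [e]
  linarith
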